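/- Let K be a field, (F, ∂, ∫) an ordinary integro-differential algebra over K (dim_K ker ∂ = 1) with evaluation e = id_F − ∫∘∂. Let n ≥ 1, let c₀, …, c_{n−1} ∈ F, and define the K-linear map T : F → F by T(u) = ∂ⁿ(u) + Σ_{i=0}^{n−1} c_i·∂ⁱ(u). Let u₁, …, uₙ ∈ F satisfy T(u_j) = 0 for all j and ker T ⊆ span_K{u₁, …, uₙ}, and suppose the Wronskian matrix W ∈ Matrix(Fin n, Fin n, F) with entries W_{i,j} = ∂ⁱ(u_j) (0 ≤ i ≤ n−1) has invertible determinant d = det W in F. For each i let d_i be the determinant of the matrix obtained from W by replacing its i-th column by the n-th standard basis vector (0, …, 0, 1)ᵀ. Then for every f ∈ F, the element u = Σ_{i=1}^{n} u_i·∫(d⁻¹·d_i·f) is the unique element of F satisfying T(u) = f and e(∂ⁱ(u)) = 0 for all 0 ≤ i ≤ n−1. -/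

import Mathlib

section aux
variable {K F : Type*} [Field K] [CommRing F] [Algebra K F]

/-- The evaluation `e = id - ∫∘∂` as a ring homomorphism. -/
def evalRingHom (D I : F →ₗ[K] F)
    (leibniz : ∀ f g : F, D (f * g) = D f * g + f * D g)
    (sect : ∀ f : F, D (I f) = f)
    (diffBaxter : ∀ f g : F,
      I (D f) * I (D g) + I (D (f * g)) = I (D f) * g + f * I (D g)) : F →+* F where
  toFun x := x - I (D x)
  map_one' := by
    have h := leibniz 1 1
    simp only [mul_one, one_mul] at h
    have h1 : D (1 : F) = 0 := by linear_combination -h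
    simp [h1]
  map_mul' a b := by linear_combination -diffBaxter a b
  map_zero' := by simp
  map_add' a b := by simp only [map_add]; ring

end aux

set_option maxHeartbeats 1000000 in

/-- Variation of constants: in an ordinary integro-differential
algebra `(F, ∂, ∫)` over a field `K`, for a monic differential operator
`T = ∂ⁿ + c_{n−1}∂^{n−1} + ⋯ + c₀` with a regular fundamental system `u₁, …, uₙ`
(Wronskian matrix `W`, invertible determinant `d = det W`, and `dᵢ` the determinants
obtained by replacing the `i`-th column of `W` by the `n`-th unit vector), the canonical
initial value problem `T u = f`, `e(u) = e(∂u) = ⋯ = e(∂^{n−1}u) = 0` has the unique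
solution `u = Σᵢ uᵢ · ∫(d⁻¹·dᵢ·f)`. -/
theorem stmt_11 (K : Type*) [Field K] (F : Type*) [CommRing F] [Algebra K F]
    (D I : F →ₗ[K] F)
    (leibniz : ∀ f g : F, D (f * g) = D f * g + f * D g)
    (sect : ∀ f : F, D (I f) = f)
    (diffBaxter : ∀ f g : F,
      I (D f) * I (D g) + I (D (f * g)) = I (D f) * g + f * I (D g))
    (ordinary : Module.finrank K (LinearMap.ker D) = 1)
    (n : ℕ) (hn : 1 ≤ n) (c : Fin n → F)
    (T : F → F)
    (hT : ∀ v : F, T v = (D ^ n) v + ∑ i : Fin n, c i * (D ^ (i : ℕ)) v)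
    (u : Fin n → F)
    (hu : ∀ j, T (u j) = 0)
    (hker : ∀ v : F, T v = 0 → v ∈ Submodule.span K (Set.range u))
    (W : Matrix (Fin n) (Fin n) F)
    (hW : ∀ i j, W i j = (D ^ (i : ℕ)) (u j))
    (hd : IsUnit W.det)
    (di : Fin n → F)
    (hdi : ∀ i : Fin n,
      di i = (W.updateCol i (Pi.single (⟨n - 1, by omega⟩ : Fin n) 1)).det)
    (f : F) :
    T (∑ i : Fin n, u i * I (Ring.inverse W.det * di i * f)) = f ∧
    (∀ k < n, (D ^ k) (∑ i : Fin n, u i * I (Ring.inverse W.det * di i * f)) -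
        I (D ((D ^ k) (∑ i : Fin n, u i * I (Ring.inverse W.det * di i * f)))) = 0) ∧
    ∀ v : F, T v = f → (∀ k < n, (D ^ k) v - I (D ((D ^ k) v)) = 0) →
      v = ∑ i : Fin n, u i * I (Ring.inverse W.det * di i * f) := by
  set E : F →+* F := evalRingHom D I leibniz sect diffBaxter with hE
  have hEdef : ∀ x : F, E x = x - I (D x) := fun x => rfl
  set g : Fin n → F := fun i => I (Ring.inverse W.det * di i * f) with hg
  set s : F := ∑ i : Fin n, u i * I (Ring.inverse W.det * di i * f) with hs
  have hsg : s = ∑ i : Fin n, u i * g i := rfl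
  set p : Fin n := ⟨n - 1, by omega⟩ with hp
  -- Cramer's rule
  have hcr : ∀ k : Fin n, ∑ j, W k j * di j = if k = p then W.det else 0 := by
    intro k
    have hmv := congrFun (Matrix.mulVec_cramer W (Pi.single p (1 : F))) k
    calc ∑ j, W k j * di j
        = (W.mulVec (Matrix.cramer W (Pi.single p (1 : F)))) k := by
          simp only [Matrix.mulVec, dotProduct]
          refine Finset.sum_congr rfl fun j _ => ?_
          rw [hdi j, Matrix.cramer_apply]
      _ = (W.det • (Pi.single p 1 : Fin n → F)) k := by rw [hmv]
      _ = if k = p then W.det else 0 := by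
          simp [Pi.single_apply, mul_ite]
  have hDg : ∀ i, D (g i) = Ring.inverse W.det * di i * f := fun i => sect _
  -- derivatives of s
  have hDk : ∀ k, k < n → (D ^ k) s = ∑ i : Fin n, (D ^ k) (u i) * g i := by
    intro k hk
    induction k with
    | zero => simpa using hsg
    | succ m ih =>
      have hm : m < n := by omega
      rw [pow_succ', Module.End.mul_apply, ih hm, map_sum]
      have step : ∀ i : Fin n, D ((D ^ m) (u i) * g i)
          = (D ^ (m + 1)) (u i) * g i + (D ^ m) (u i) * (Ring.inverse W.det * di i * f) := by
        intro i
        rw [leibniz, hDg, pow_succ', Module.End.mul_apply]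
      rw [Finset.sum_congr rfl fun i _ => step i, Finset.sum_add_distrib]
      have hzero : ∑ i : Fin n, (D ^ m) (u i) * (Ring.inverse W.det * di i * f) = 0 := by
        have h1 : ∑ i : Fin n, (D ^ m) (u i) * (Ring.inverse W.det * di i * f)
            = Ring.inverse W.det * (∑ i, W (⟨m, hm⟩ : Fin n) i * di i) * f := by
          rw [Finset.mul_sum, Finset.sum_mul]
          refine Finset.sum_congr rfl fun i _ => ?_
          rw [hW]; ring
        rw [h1, hcr, if_neg, mul_zero, zero_mul]
        simp only [Fin.ext_iff, hp]
        omega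
      rw [hzero, add_zero]
      simp only [pow_succ', Module.End.mul_apply]
  have hn1 : n - 1 + 1 = n := by omega
  have hDn : (D ^ n) s = (∑ i : Fin n, (D ^ n) (u i) * g i) + f := by
    conv_lhs => rw [← hn1]
    rw [pow_succ', Module.End.mul_apply, hDk (n - 1) (by omega), map_sum]
    have step : ∀ i : Fin n, D ((D ^ (n - 1)) (u i) * g i)
        = (D ^ (n - 1 + 1)) (u i) * g i + (D ^ (n - 1)) (u i) * (Ring.inverse W.det * di i * f) := by
      intro i
      rw [leibniz, hDg, pow_succ', Module.End.mul_apply]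
    rw [Finset.sum_congr rfl fun i _ => step i, Finset.sum_add_distrib, hn1]
    congr 1
    have h1 : ∑ i : Fin n, (D ^ (n - 1)) (u i) * (Ring.inverse W.det * di i * f)
        = Ring.inverse W.det * (∑ i, W p i * di i) * f := by
      rw [Finset.mul_sum, Finset.sum_mul]
      refine Finset.sum_congr rfl fun i _ => ?_
      rw [hW, hp]; ring
    rw [h1, hcr, if_pos rfl, Ring.inverse_mul_cancel _ hd, one_mul]
  -- T s = f
  have hTs : T s = f := by
    rw [hT, hDn]
    have h2 : ∑ i : Fin n, c i * (D ^ (i : ℕ)) s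
        = ∑ j : Fin n, (∑ i : Fin n, c i * (D ^ (i : ℕ)) (u j)) * g j := by
      calc ∑ i : Fin n, c i * (D ^ (i : ℕ)) s
          = ∑ i : Fin n, ∑ j : Fin n, c i * ((D ^ (i : ℕ)) (u j) * g j) := by
            refine Finset.sum_congr rfl fun i _ => ?_
            rw [hDk i i.isLt, Finset.mul_sum]
        _ = ∑ j : Fin n, ∑ i : Fin n, c i * ((D ^ (i : ℕ)) (u j) * g j) :=
            Finset.sum_comm
        _ = ∑ j : Fin n, (∑ i : Fin n, c i * (D ^ (i : ℕ)) (u j)) * g j := by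
            refine Finset.sum_congr rfl fun j _ => ?_
            rw [Finset.sum_mul]
            exact Finset.sum_congr rfl fun i _ => by ring
    rw [h2]
    have h4 : (∑ i : Fin n, (D ^ n) (u i) * g i)
        + ∑ j : Fin n, (∑ i : Fin n, c i * (D ^ (i : ℕ)) (u j)) * g j = 0 := by
      rw [← Finset.sum_add_distrib]
      refine Finset.sum_eq_zero fun j _ => ?_
      have h5 := hu j
      rw [hT] at h5
      have : ((D ^ n) (u j) + ∑ i : Fin n, c i * (D ^ (i : ℕ)) (u j)) * g j
          = (D ^ n) (u j) * g j + (∑ i : Fin n, c i * (D ^ (i : ℕ)) (u j)) * g j := by ring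
      rw [← this, h5, zero_mul]
    linear_combination h4
  -- evaluation kills I
  have hEI : ∀ x : F, E (I x) = 0 := by
    intro x
    rw [hEdef, sect, sub_self]
  have hEg : ∀ i, E (g i) = 0 := fun i => hEI _
  -- initial conditions
  have hinit : ∀ k < n, (D ^ k) s - I (D ((D ^ k) s)) = 0 := by
    intro k hk
    have h1 : E ((D ^ k) s) = 0 := by
      rw [hDk k hk, map_sum]
      refine Finset.sum_eq_zero fun i _ => ?_
      rw [map_mul, hEg, mul_zero]
    rw [← hEdef]
    exact h1
  refine ⟨hTs, hinit, ?_⟩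
  -- uniqueness
  intro v hv he
  have hD1 : D (1 : F) = 0 := by
    have h := leibniz 1 1
    simp only [mul_one, one_mul] at h
    linear_combination -h
  have hDalg : ∀ x : K, D (algebraMap K F x) = 0 := by
    intro x
    rw [Algebra.algebraMap_eq_smul_one, map_smul, hD1, smul_zero]
  have hEalg : ∀ x : K, E (algebraMap K F x) = algebraMap K F x := by
    intro x
    rw [hEdef, hDalg, map_zero, sub_zero]
  have hEsmul : ∀ (b : K) (x : F), E (b • x) = b • E x := by
    intro b x
    rw [Algebra.smul_def, map_mul, hEalg, ← Algebra.smul_def]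
  have hnontriv : Nontrivial F := by
    have h1 : Nontrivial (LinearMap.ker D) :=
      Module.nontrivial_of_finrank_eq_succ (n := 0) ordinary
    obtain ⟨⟨x, _⟩, ⟨y, _⟩, hxy⟩ := h1
    exact ⟨x, y, fun h => hxy (Subtype.ext h)⟩
  have hw : T (v - s) = 0 := by
    rw [hT]
    have hv' := hv; rw [hT] at hv'
    have hs' := hTs; rw [hT] at hs'
    have h6 : ∑ i : Fin n, c i * (D ^ (i : ℕ)) (v - s)
        = (∑ i : Fin n, c i * (D ^ (i : ℕ)) v) - ∑ i : Fin n, c i * (D ^ (i : ℕ)) s := by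
      rw [← Finset.sum_sub_distrib]
      exact Finset.sum_congr rfl fun i _ => by rw [map_sub]; ring
    rw [map_sub, h6]
    linear_combination hv' - hs'
  obtain ⟨a, ha⟩ := (Submodule.mem_span_range_iff_exists_fun K).mp (hker _ hw)
  have hEw : ∀ k, k < n → E ((D ^ k) (v - s)) = 0 := by
    intro k hk
    have h1 : E ((D ^ k) v) = 0 := he k hk
    have h2 : E ((D ^ k) s) = 0 := hinit k hk
    rw [map_sub, map_sub, h1, h2, sub_zero]
  set M : Matrix (Fin n) (Fin n) F := (RingHom.mapMatrix E) W with hM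
  have hMdet : IsUnit M.det := by
    rw [hM, ← RingHom.map_det]
    exact hd.map E
  have hmv0 : M.mulVec (fun j => algebraMap K F (a j)) = 0 := by
    funext k
    have hsum : (D ^ (k : ℕ)) (v - s) = ∑ j, a j • (D ^ (k : ℕ)) (u j) := by
      rw [← ha, map_sum]
      exact Finset.sum_congr rfl fun j _ => by rw [map_smul]
    have hk0 := hEw (k : ℕ) k.isLt
    rw [hsum, map_sum] at hk0
    have hterm : ∀ j, M k j * algebraMap K F (a j) = E (a j • (D ^ (k : ℕ)) (u j)) := by
      intro j
      rw [hEsmul, Algebra.smul_def]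
      have : M k j = E (W k j) := rfl
      rw [this, hW]
      ring
    calc M.mulVec (fun j => algebraMap K F (a j)) k
        = ∑ j, M k j * algebraMap K F (a j) := rfl
      _ = ∑ j, E (a j • (D ^ (k : ℕ)) (u j)) := Finset.sum_congr rfl fun j _ => hterm j
      _ = 0 := hk0
  have hvec : (fun j => algebraMap K F (a j)) = 0 := by
    have h3 := congrArg (fun x => M⁻¹.mulVec x) hmv0
    simpa [Matrix.mulVec_mulVec, Matrix.nonsing_inv_mul M hMdet, Matrix.one_mulVec,
      Matrix.mulVec_zero] using h3
  have ha0 : ∀ j, a j = 0 := by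
    intro j
    have h4 : algebraMap K F (a j) = 0 := congrFun hvec j
    exact (algebraMap K F).injective (by rw [h4, map_zero])
  have hvs : v - s = 0 := by
    rw [← ha]
    exact Finset.sum_eq_zero fun j _ => by rw [ha0 j, zero_smul]
  have := sub_eq_zero.mp hvs
  exact this
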